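/- For every refining quadratic map ξ and all streams α, β of digits from {L, R, M}, there exist n ∈ ℕ and φ ∈ {L, R, M} such that ξ(α₀∘...∘α_{n-1}([-1,1]), β₀∘...∘β_{n-1}([-1,1])) ⊆ φ([-1,1]). -/

import Mathlib

noncomputable def digitL : ℝ → ℝ := fun x => (x - 1) / (x + 3)
noncomputable def digitR : ℝ → ℝ := fun x => (x + 1) / (-x + 3)
noncomputable def digitM : ℝ → ℝ := fun x => x / 3

noncomputable def compStream (α : ℕ → ℝ → ℝ) : ℕ → ℝ → ℝ
  | 0 => id
  | k + 1 => compStream α k ∘ α k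

lemma digitL_mem {x : ℝ} (hx : x ∈ Set.Icc (-1:ℝ) 1) : digitL x ∈ Set.Icc (-1:ℝ) 1 := by
  obtain ⟨h1, h2⟩ := hx
  have hd : (0:ℝ) < x + 3 := by linarith
  simp only [digitL]
  constructor
  · rw [le_div_iff₀ hd] ; linarith
  · rw [div_le_iff₀ hd] ; linarith

lemma digitR_mem {x : ℝ} (hx : x ∈ Set.Icc (-1:ℝ) 1) : digitR x ∈ Set.Icc (-1:ℝ) 1 := by
  obtain ⟨h1, h2⟩ := hx
  have hd : (0:ℝ) < -x + 3 := by linarith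
  simp only [digitR]
  constructor
  · rw [le_div_iff₀ hd] ; linarith
  · rw [div_le_iff₀ hd] ; linarith

lemma digitM_mem {x : ℝ} (hx : x ∈ Set.Icc (-1:ℝ) 1) : digitM x ∈ Set.Icc (-1:ℝ) 1 := by
  obtain ⟨h1, h2⟩ := hx
  simp only [digitM]
  constructor <;> nlinarith

lemma mem_image_digitL {t : ℝ} (h1 : -1 ≤ t) (h2 : t ≤ 0) :
    t ∈ digitL '' Set.Icc (-1:ℝ) 1 := by
  have hden : (0:ℝ) < 1 - t := by linarith
  refine ⟨(1 + 3*t)/(1 - t), ⟨?_, ?_⟩, ?_⟩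
  · rw [le_div_iff₀ hden] ; linarith
  · rw [div_le_iff₀ hden] ; linarith
  · simp only [digitL]
    have hne : (1 + 3*t)/(1-t) + 3 = 4/(1-t) := by field_simp ; ring
    rw [div_eq_iff]
    · field_simp
      ring
    · rw [hne]
      exact ne_of_gt (div_pos (by norm_num) hden)

lemma mem_image_digitR {t : ℝ} (h1 : 0 ≤ t) (h2 : t ≤ 1) :
    t ∈ digitR '' Set.Icc (-1:ℝ) 1 := by
  have hden : (0:ℝ) < 1 + t := by linarith
  refine ⟨(3*t - 1)/(1 + t), ⟨?_, ?_⟩, ?_⟩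
  · rw [le_div_iff₀ hden] ; linarith
  · rw [div_le_iff₀ hden] ; linarith
  · simp only [digitR]
    have hne : -((3*t-1)/(1+t)) + 3 = 4/(1+t) := by field_simp ; ring
    rw [div_eq_iff]
    · field_simp
      ring
    · rw [hne]
      exact ne_of_gt (div_pos (by norm_num) hden)

lemma mem_image_digitM {t : ℝ} (h1 : -(1/3) ≤ t) (h2 : t ≤ 1/3) :
    t ∈ digitM '' Set.Icc (-1:ℝ) 1 := by
  exact ⟨3*t, ⟨by linarith, by linarith⟩, by simp only [digitM] ; ring⟩

lemma mob (α : ℕ → ℝ → ℝ) (hα : ∀ i, α i = digitL ∨ α i = digitR ∨ α i = digitM) (n : ℕ) :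
    ∃ p q r s : ℝ,
      0 < p*s - q*r ∧
      (∀ x ∈ Set.Icc (-1:ℝ) 1, 0 < r*x + s) ∧
      (∀ x ∈ Set.Icc (-1:ℝ) 1, p*s - q*r ≤ (r*x + s)^2) ∧
      ((n:ℝ)+1) * (p*s - q*r) ≤ (r + s)*(s - r) ∧
      (∀ x ∈ Set.Icc (-1:ℝ) 1, compStream α n x = (p*x + q)/(r*x + s)) := by
  induction n with
  | zero =>
    refine ⟨1, 0, 0, 1, by norm_num, by norm_num, by norm_num, by norm_num, ?_⟩
    intro x hx
    simp [compStream]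
  | succ k ih =>
    obtain ⟨p, q, r, s, hdet, hden, hsq, hend, heq⟩ := ih
    have hcomp : ∀ x : ℝ, compStream α (k+1) x = compStream α k (α k x) := fun x => rfl
    rcases hα k with hd | hd | hd
    · -- digit L : a = (x-1)/(x+3), new matrix (p+q, 3q-p, r+s, 3s-r)
      refine ⟨p + q, 3*q - p, r + s, 3*s - r, ?_, ?_, ?_, ?_, ?_⟩
      · nlinarith
      · intro x hx
        have h3 : (0:ℝ) < x + 3 := by linarith [hx.1]
        have ha := digitL_mem hx
        have h4 := hden _ ha
        have hfac : (r+s)*x + (3*s - r) = (r * digitL x + s) * (x + 3) := by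
          simp only [digitL] ; field_simp ; ring
        rw [hfac] ; positivity
      · intro x hx
        have h3 : (0:ℝ) < x + 3 := by linarith [hx.1]
        have ha := digitL_mem hx
        have h4 := hsq _ ha
        have hfac : (r+s)*x + (3*s - r) = (r * digitL x + s) * (x + 3) := by
          simp only [digitL] ; field_simp ; ring
        have hdet2 : (p+q)*(3*s-r) - (3*q-p)*(r+s) = 4*(p*s - q*r) := by ring
        rw [hfac, hdet2]
        have h9 : (4:ℝ) ≤ (x+3)^2 := by nlinarith [hx.1, hx.2]
        nlinarith [sq_nonneg (r * digitL x + s)]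
      · -- (k+2)*4D ≤ (r+s + 3s-r)*((3s-r)-(r+s)) = 4s * (2s - 2r) = 8 s (s-r)
        have hD1 : p*s - q*r ≤ (s - r)^2 := by
          have := hsq (-1) (by norm_num) ; nlinarith
        push_cast
        nlinarith
      · intro x hx
        have h3 : (0:ℝ) < x + 3 := by linarith [hx.1]
        have ha := digitL_mem hx
        have h4 := hden _ ha
        rw [hcomp, hd, heq _ ha]
        have hfac : (r+s)*x + (3*s - r) = (r * digitL x + s) * (x + 3) := by
          simp only [digitL] ; field_simp ; ring
        rw [div_eq_div_iff h4.ne' (by rw [hfac] ; positivity)]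
        simp only [digitL]
        field_simp
        ring
    · -- digit R : a = (x+1)/(-x+3), new matrix (p-q, p+3q, r-s, r+3s)
      refine ⟨p - q, p + 3*q, r - s, r + 3*s, ?_, ?_, ?_, ?_, ?_⟩
      · nlinarith
      · intro x hx
        have h3 : (0:ℝ) < -x + 3 := by linarith [hx.2]
        have ha := digitR_mem hx
        have h4 := hden _ ha
        have hfac : (r-s)*x + (r + 3*s) = (r * digitR x + s) * (-x + 3) := by
          simp only [digitR] ; field_simp ; ring
        rw [hfac] ; positivity
      · intro x hx
        have h3 : (0:ℝ) < -x + 3 := by linarith [hx.2]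
        have ha := digitR_mem hx
        have h4 := hsq _ ha
        have hfac : (r-s)*x + (r + 3*s) = (r * digitR x + s) * (-x + 3) := by
          simp only [digitR] ; field_simp ; ring
        have hdet2 : (p-q)*(r+3*s) - (p+3*q)*(r-s) = 4*(p*s - q*r) := by ring
        rw [hfac, hdet2]
        have h9 : (4:ℝ) ≤ (-x+3)^2 := by nlinarith [hx.1, hx.2]
        nlinarith [sq_nonneg (r * digitR x + s)]
      · have hD1 : p*s - q*r ≤ (s + r)^2 := by
          have := hsq 1 (by norm_num) ; nlinarith
        push_cast
        nlinarith
      · intro x hx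
        have h3 : (0:ℝ) < -x + 3 := by linarith [hx.2]
        have ha := digitR_mem hx
        have h4 := hden _ ha
        rw [hcomp, hd, heq _ ha]
        have hfac : (r-s)*x + (r + 3*s) = (r * digitR x + s) * (-x + 3) := by
          simp only [digitR] ; field_simp ; ring
        rw [div_eq_div_iff h4.ne' (by rw [hfac] ; positivity)]
        simp only [digitR]
        field_simp
        ring
    · -- digit M : a = x/3, new matrix (p, 3q, r, 3s)
      refine ⟨p, 3*q, r, 3*s, ?_, ?_, ?_, ?_, ?_⟩
      · nlinarith
      · intro x hx
        have ha := digitM_mem hx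
        have h4 := hden _ ha
        have hfac : r*x + 3*s = (r * digitM x + s) * 3 := by
          simp only [digitM] ; ring
        rw [hfac] ; positivity
      · intro x hx
        have ha := digitM_mem hx
        have h4 := hsq _ ha
        have hfac : r*x + 3*s = (r * digitM x + s) * 3 := by
          simp only [digitM] ; ring
        have hdet2 : p*(3*s) - (3*q)*r = 3*(p*s - q*r) := by ring
        rw [hfac, hdet2]
        nlinarith [sq_nonneg (r * digitM x + s)]
      · have hD1 : p*s - q*r ≤ s^2 := by
          have := hsq 0 (by norm_num) ; nlinarith
        push_cast
        nlinarith [sq_nonneg r, sq_nonneg s, mul_nonneg (Nat.cast_nonneg k : (0:ℝ) ≤ (k:ℝ)) hdet.le]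
      · intro x hx
        have ha := digitM_mem hx
        have h4 := hden _ ha
        rw [hcomp, hd, heq _ ha]
        have hfac : r*x + 3*s = (r * digitM x + s) * 3 := by
          simp only [digitM] ; ring
        rw [div_eq_div_iff h4.ne' (by rw [hfac] ; positivity)]
        simp only [digitM]
        field_simp

lemma compStream_mem (α : ℕ → ℝ → ℝ)
    (hα : ∀ i, α i = digitL ∨ α i = digitR ∨ α i = digitM) :
    ∀ n, ∀ x ∈ Set.Icc (-1:ℝ) 1, compStream α n x ∈ Set.Icc (-1:ℝ) 1 := by
  intro n
  induction n with
  | zero => intro x hx ; simpa [compStream] using hx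
  | succ k ih =>
    intro x hx
    have : compStream α (k+1) x = compStream α k (α k x) := rfl
    rw [this]
    apply ih
    rcases hα k with hd | hd | hd <;> rw [hd]
    · exact digitL_mem hx
    · exact digitR_mem hx
    · exact digitM_mem hx

lemma compStream_diam (α : ℕ → ℝ → ℝ)
    (hα : ∀ i, α i = digitL ∨ α i = digitR ∨ α i = digitM) (n : ℕ) :
    ∀ x ∈ Set.Icc (-1:ℝ) 1, ∀ x' ∈ Set.Icc (-1:ℝ) 1,
      |compStream α n x - compStream α n x'| ≤ 2/((n:ℝ)+1) := by
  obtain ⟨p, q, r, s, hdet, hden, hsq, hend, heq⟩ := mob α hα n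
  have h1 : (0:ℝ) < r*1 + s := hden 1 ⟨by norm_num, le_refl 1⟩
  have hm1 : (0:ℝ) < r*(-1) + s := hden (-1) ⟨le_refl (-1), by norm_num⟩
  have upper : ∀ y ∈ Set.Icc (-1:ℝ) 1, (p*y+q)/(r*y+s) ≤ (p*1+q)/(r*1+s) := by
    intro y hy
    have hdy := hden y hy
    rw [div_le_div_iff₀ hdy h1]
    nlinarith [hy.2]
  have lower : ∀ y ∈ Set.Icc (-1:ℝ) 1, (p*(-1)+q)/(r*(-1)+s) ≤ (p*y+q)/(r*y+s) := by
    intro y hy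
    have hdy := hden y hy
    rw [div_le_div_iff₀ hm1 hdy]
    nlinarith [hy.1]
  have hn : (0:ℝ) < (n:ℝ) + 1 := by positivity
  have width : (p*1+q)/(r*1+s) - (p*(-1)+q)/(r*(-1)+s) ≤ 2/((n:ℝ)+1) := by
    rw [div_sub_div _ _ h1.ne' hm1.ne', div_le_div_iff₀ (by positivity) hn]
    nlinarith [hend, hdet]
  intro x hx x' hx'
  rw [heq x hx, heq x' hx', abs_sub_le_iff]
  constructor
  · linarith [upper x hx, lower x' hx']
  · linarith [upper x' hx', lower x hx]

theorem quadratic_eventually_emits (a b c d e f g h : ℝ) (ξ : ℝ → ℝ → ℝ)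
    (hξ : ξ = fun x y =>
      (a * x * y + b * x + c * y + d) / (e * x * y + f * x + g * y + h))
    (hbnd : ∀ x ∈ Set.Icc (-1 : ℝ) 1, ∀ y ∈ Set.Icc (-1 : ℝ) 1,
      e * x * y + f * x + g * y + h ≠ 0)
    (href : ∀ x ∈ Set.Icc (-1 : ℝ) 1, ∀ y ∈ Set.Icc (-1 : ℝ) 1,
      ξ x y ∈ Set.Icc (-1 : ℝ) 1)
    (α β : ℕ → ℝ → ℝ)
    (hα : ∀ i, α i = digitL ∨ α i = digitR ∨ α i = digitM)
    (hβ : ∀ i, β i = digitL ∨ β i = digitR ∨ β i = digitM) :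
    ∃ n : ℕ, ∃ φ ∈ ({digitL, digitR, digitM} : Set (ℝ → ℝ)),
      ∀ x ∈ Set.Icc (-1 : ℝ) 1, ∀ y ∈ Set.Icc (-1 : ℝ) 1,
        ξ (compStream α n x) (compStream β n y) ∈ φ '' Set.Icc (-1 : ℝ) 1 := by
  have hK : IsCompact ((Set.Icc (-1:ℝ) 1) ×ˢ (Set.Icc (-1:ℝ) 1)) :=
    isCompact_Icc.prod isCompact_Icc
  have hFc : ContinuousOn (fun pr : ℝ × ℝ => ξ pr.1 pr.2)
      ((Set.Icc (-1:ℝ) 1) ×ˢ (Set.Icc (-1:ℝ) 1)) := by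
    rw [hξ]
    apply ContinuousOn.div
    · fun_prop
    · fun_prop
    · intro pr hpr
      exact hbnd pr.1 hpr.1 pr.2 hpr.2
  have hUC := hK.uniformContinuousOn_of_continuous hFc
  rw [Metric.uniformContinuousOn_iff] at hUC
  obtain ⟨δ, hδ, H⟩ := hUC (1/6) (by norm_num)
  obtain ⟨m, hm⟩ := exists_nat_gt (2/δ)
  have h0 : (0:ℝ) ∈ Set.Icc (-1:ℝ) 1 := by norm_num
  have hmem := compStream_mem α hα m
  have hmemβ := compStream_mem β hβ m
  have hsmall : ∀ (γ : ℕ → ℝ → ℝ),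
      (∀ i, γ i = digitL ∨ γ i = digitR ∨ γ i = digitM) →
      ∀ x ∈ Set.Icc (-1:ℝ) 1, |compStream γ m x - compStream γ m 0| < δ := by
    intro γ hγ x hx
    have hd := compStream_diam γ hγ m x hx 0 h0
    have hmm : (2:ℝ)/((m:ℝ)+1) < δ := by
      rw [div_lt_iff₀ (by positivity)]
      have : 2/δ < (m:ℝ) := hm
      rw [div_lt_iff₀ hδ] at this
      nlinarith
    linarith
  set u := ξ (compStream α m 0) (compStream β m 0) with hu
  have humem : u ∈ Set.Icc (-1:ℝ) 1 := href _ (hmem 0 h0) _ (hmemβ 0 h0)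
  have key : ∀ x ∈ Set.Icc (-1:ℝ) 1, ∀ y ∈ Set.Icc (-1:ℝ) 1,
      |ξ (compStream α m x) (compStream β m y) - u| < 1/6 := by
    intro x hx y hy
    have := H (compStream α m x, compStream β m y) ⟨hmem x hx, hmemβ y hy⟩
      (compStream α m 0, compStream β m 0) ⟨hmem 0 h0, hmemβ 0 h0⟩ ?_
    · simpa [Real.dist_eq] using this
    · rw [Prod.dist_eq]
      apply max_lt
      · rw [Real.dist_eq] ; exact hsmall α hα x hx
      · rw [Real.dist_eq] ; exact hsmall β hβ y hy
  refine ⟨m, ?_⟩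
  rcases le_or_gt u (-(1/6)) with hc | hc
  · refine ⟨digitL, Set.mem_insert _ _, ?_⟩
    intro x hx y hy
    have hv := href _ (hmem x hx) _ (hmemβ y hy)
    have hk := key x hx y hy
    rw [abs_lt] at hk
    exact mem_image_digitL hv.1 (by linarith)
  rcases le_or_gt (1/6) u with hc2 | hc2
  · refine ⟨digitR, Set.mem_insert_of_mem _ (Set.mem_insert _ _), ?_⟩
    intro x hx y hy
    have hv := href _ (hmem x hx) _ (hmemβ y hy)
    have hk := key x hx y hy
    rw [abs_lt] at hk
    exact mem_image_digitR (by linarith) hv.2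
  · refine ⟨digitM, Set.mem_insert_of_mem _ (Set.mem_insert_of_mem _ rfl), ?_⟩
    intro x hx y hy
    have hk := key x hx y hy
    rw [abs_lt] at hk
    exact mem_image_digitM (by linarith) (by linarith)
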